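/- Consider a star with N ≥ 2 semi-infinite edges, coefficients aᵢ > 0, bᵢ ≠ 0 (with d_i = 0), where edges 1,…,L are incoming and edges L+1,…,N are outgoing (1 ≤ L < N). Suppose √(aᵢ/a₁) = bᵢ/b₁ > 0 for all i and Σ_{i=1}^{L} bᵢ = Σ_{j=L+1}^{N} bⱼ. Fix c₁ > 0 and set cᵢ = √(aᵢ/a₁) c₁. Then: (1) cᵢ > cᵢ·0 = 0 and cᵢ - 0 > 0 for all i; (2) the amplitude condition (c₁)/b₁ = cᵢ/bᵢ holds for all i; (3) the width condition c₁ √(c₁/(a₁c₁)) = cᵢ √(cᵢ/(aᵢcᵢ)) holds for all i; and (4) the Kirchhoff condition Σ_{i=1}^{L} aᵢ/cᵢ = Σ_{j=L+1}^{N} aⱼ/cⱼ holds. -/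

import Mathlib

open Real Finset

theorem bbm_star_travelling_wave_conditions (N L : ℕ) (hN : 2 ≤ N) (hL : 1 ≤ L) (hLN : L < N)
    (a b : ℕ → ℝ) (ha : ∀ i ∈ Icc 1 N, 0 < a i) (hb : ∀ i ∈ Icc 1 N, b i ≠ 0)
    (hcomp : ∀ i ∈ Icc 1 N, Real.sqrt (a i / a 1) = b i / b 1 ∧ 0 < b i / b 1)
    (hkirch : ∑ i ∈ Icc 1 L, b i = ∑ j ∈ Icc (L + 1) N, b j)
    (c₁ : ℝ) (hc₁ : 0 < c₁) (c : ℕ → ℝ) (hc : ∀ i ∈ Icc 1 N, c i = Real.sqrt (a i / a 1) * c₁) :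
    (∀ i ∈ Icc 1 N, 0 < c i) ∧
    (∀ i ∈ Icc 1 N, c 1 / b 1 = c i / b i) ∧
    (∀ i ∈ Icc 1 N, c 1 * Real.sqrt (c 1 / (a 1 * c 1)) = c i * Real.sqrt (c i / (a i * c i))) ∧
    (∑ i ∈ Icc 1 L, a i / c i = ∑ j ∈ Icc (L + 1) N, a j / c j) := by
  have h1N : 1 ∈ Icc 1 N := by simp [mem_Icc]; omega
  have ha1 := ha 1 h1N
  have hb1 := hb 1 h1N
  have hc1eq : c 1 = c₁ := by
    rw [hc 1 h1N, div_self (ne_of_gt ha1), Real.sqrt_one, one_mul]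
  have key : ∀ i ∈ Icc 1 N, c i = (b i / b 1) * c₁ ∧ a i = a 1 * (b i / b 1) ^ 2 := by
    intro i hi
    obtain ⟨hs, hspos⟩ := hcomp i hi
    refine ⟨by rw [hc i hi, hs], ?_⟩
    have hsq : (Real.sqrt (a i / a 1)) ^ 2 = a i / a 1 :=
      Real.sq_sqrt (div_nonneg (ha i hi).le ha1.le)
    rw [hs] at hsq
    field_simp at hsq ⊢
    linarith [hsq]
  have hcpos : ∀ i ∈ Icc 1 N, 0 < c i := by
    intro i hi
    rw [(key i hi).1]
    exact mul_pos (hcomp i hi).2 hc₁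
  refine ⟨hcpos, ?_, ?_, ?_⟩
  · intro i hi
    have hbi := hb i hi
    rw [hc1eq, (key i hi).1]
    field_simp
  · intro i hi
    obtain ⟨hci, hai⟩ := key i hi
    have hbipos := (hcomp i hi).2
    have hbi : b i ≠ 0 := hb i hi
    have hsa1 : 0 < Real.sqrt (a 1) := Real.sqrt_pos.mpr ha1
    have hcipos := hcpos i hi
    have hl : c 1 / (a 1 * c 1) = 1 / a 1 := by
      rw [hc1eq, mul_comm, ← div_div, div_self hc₁.ne']
    have hr : c i / (a i * c i) = 1 / a i := by
      rw [mul_comm, ← div_div, div_self hcipos.ne']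
    rw [hl, hr, hc1eq, one_div, one_div, Real.sqrt_inv, Real.sqrt_inv, hci, hai,
      Real.sqrt_mul ha1.le, Real.sqrt_sq hbipos.le]
    field_simp
  · have hterm : ∀ i ∈ Icc 1 N, a i / c i = (a 1 / (b 1 * c₁)) * b i := by
      intro i hi
      obtain ⟨hci, hai⟩ := key i hi
      have hbipos := (hcomp i hi).2
      have hbi : b i ≠ 0 := hb i hi
      rw [hci, hai]
      field_simp
    have hsub1 : Icc 1 L ⊆ Icc 1 N := Icc_subset_Icc_right hLN.le
    have hsub2 : Icc (L + 1) N ⊆ Icc 1 N := Icc_subset_Icc_left (by omega)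
    calc ∑ i ∈ Icc 1 L, a i / c i = ∑ i ∈ Icc 1 L, (a 1 / (b 1 * c₁)) * b i :=
          Finset.sum_congr rfl fun i hi => hterm i (hsub1 hi)
      _ = (a 1 / (b 1 * c₁)) * ∑ i ∈ Icc 1 L, b i := by rw [Finset.mul_sum]
      _ = (a 1 / (b 1 * c₁)) * ∑ j ∈ Icc (L + 1) N, b j := by rw [hkirch]
      _ = ∑ j ∈ Icc (L + 1) N, (a 1 / (b 1 * c₁)) * b j := by rw [Finset.mul_sum]
      _ = ∑ j ∈ Icc (L + 1) N, a j / c j :=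
          Finset.sum_congr rfl fun j hj => (hterm j (hsub2 hj)).symm
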